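/- For the additive hazards model with λ₀(t) = 1 and Z ~ Bernoulli(1/2), the explained variation Ω²(β) = Var(E[T|Z])/Var(T) is strictly increasing in |β| on β > -1, β ≠ 0; specifically its derivative with respect to |β| equals |β|(2+β) / (4·Var(T)²·(1+β)⁴) > 0. -/

import Mathlib

open Real

/-- For the additive hazards model with `λ₀(t) = 1` and `Z ~ Bernoulli(1/2)`
(so `T|Z=0 ~ Exp(1)`, `T|Z=1 ~ Exp(1+β)`, with
`Var(E[T|Z]) = (1/4)(1 - 1/(1+β))²` and
`Var(T) = (1/2)(1 + 1/(1+β)²) + (1/4)(1 - 1/(1+β))²`),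
the explained variation `Ω²(β) = Var(E[T|Z])/Var(T)` is strictly increasing in `|β|`
on `β > -1`, `β ≠ 0`, and its derivative with respect to `|β|` equals
`|β|(2+β) / (4·Var(T)²·(1+β)⁴) > 0`. -/
theorem explained_variation_increasing_in_abs_beta
    (VarE VarT Ω2 : ℝ → ℝ)
    (hVarE : ∀ β, VarE β = (1/4) * (1 - 1/(1+β))^2)
    (hVarT : ∀ β, VarT β = (1/2) * (1 + 1/(1+β)^2) + (1/4) * (1 - 1/(1+β))^2)
    (hΩ : ∀ β, Ω2 β = VarE β / VarT β) :
    (∀ β₁ β₂ : ℝ, -1 < β₁ → -1 < β₂ → β₁ * β₂ ≥ 0 → |β₁| < |β₂| → Ω2 β₁ < Ω2 β₂) ∧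
    (∀ β : ℝ, -1 < β → β ≠ 0 →
      HasDerivAt Ω2
        (Real.sign β * (|β| * (2 + β) / (4 * (VarT β)^2 * (1+β)^4))) β ∧
      0 < |β| * (2 + β) / (4 * (VarT β)^2 * (1+β)^4)) := by
  have hD : ∀ β : ℝ, 0 < 3*β^2+4*β+4 := by
    intro β; nlinarith [sq_nonneg β, sq_nonneg (β+2)]
  have hEq : ∀ β : ℝ, -1 < β → Ω2 β = β^2 / (3*β^2+4*β+4) := by
    intro β hβ
    have h1 : (1:ℝ) + β ≠ 0 := by linarith
    rw [hΩ, hVarE, hVarT]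
    rw [div_eq_div_iff]
    · field_simp
      ring
    · have := hD β
      field_simp
      exact div_ne_zero (by positivity) (by simp [h1])
    · exact (hD β).ne'
  constructor
  · intro β₁ β₂ h1 h2 hprod habs
    rw [hEq β₁ h1, hEq β₂ h2, div_lt_div_iff₀ (hD β₁) (hD β₂)]
    rcases lt_trichotomy β₂ 0 with hb | hb | hb
    · have hβ1 : β₁ ≤ 0 := by
        by_contra h
        push_neg at h
        nlinarith
      have h21 : β₂ < β₁ := by
        rw [abs_of_nonpos hβ1, abs_of_neg hb] at habs; linarith
      have haux : (0:ℝ) < 1 - (1+β₁)*(1+β₂) := by nlinarith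
      nlinarith [mul_pos (sub_pos.mpr h21) haux]
    · subst hb; simp at habs; exact absurd habs (abs_nonneg β₁).not_gt
    · have hβ1 : 0 ≤ β₁ := by
        by_contra h
        push_neg at h
        nlinarith
      have h12 : β₁ < β₂ := by
        rw [abs_of_nonneg hβ1, abs_of_pos hb] at habs; linarith
      have haux : (0:ℝ) < β₁*β₂+β₁+β₂ := by nlinarith
      nlinarith [mul_pos (sub_pos.mpr h12) haux]
  · intro β hβ hβ0
    have h1 : (1:ℝ) + β ≠ 0 := by linarith
    have h1p : (0:ℝ) < 1 + β := by linarith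
    have hVT : VarT β = (3*β^2+4*β+4) / (4*(1+β)^2) := by
      rw [hVarT]
      field_simp
      ring
    have hVTpos : 0 < VarT β := by
      rw [hVT]; exact div_pos (hD β) (by positivity)
    have habs : 0 < |β| := abs_pos.mpr hβ0
    have hpos : 0 < |β| * (2 + β) / (4 * (VarT β)^2 * (1+β)^4) := by
      have h2 : (0:ℝ) < 2 + β := by linarith
      positivity
    refine ⟨?_, hpos⟩
    have hg : HasDerivAt (fun x : ℝ => x^2 / (3*x^2+4*x+4))
        (4*β*(β+2) / (3*β^2+4*β+4)^2) β := by
      have ha : HasDerivAt (fun x : ℝ => x^2) (2*β) β := by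
        simpa using (hasDerivAt_pow 2 β)
      have hb : HasDerivAt (fun x : ℝ => 3*x^2+4*x+4) (6*β+4) β := by
        have h := (((hasDerivAt_pow 2 β).const_mul (3:ℝ)).add
          ((hasDerivAt_id β).const_mul (4:ℝ))).add_const 4
        refine h.congr_deriv ?_
        push_cast
        ring
      have h := ha.div hb (hD β).ne'
      refine h.congr_deriv ?_
      have hd := (hD β).ne'
      field_simp
      ring
    have hev : Ω2 =ᶠ[nhds β] (fun x : ℝ => x^2 / (3*x^2+4*x+4)) := by
      filter_upwards [IsOpen.mem_nhds (isOpen_Ioi (a := (-1:ℝ))) hβ] with x hx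
      exact hEq x hx
    have hΩd : HasDerivAt Ω2 (4*β*(β+2) / (3*β^2+4*β+4)^2) β :=
      hg.congr_of_eventuallyEq hev
    have hsm : Real.sign β * |β| = β := by
      rcases lt_or_gt_of_ne hβ0 with h | h
      · rw [Real.sign_of_neg h, abs_of_neg h]; ring
      · rw [Real.sign_of_pos h, abs_of_pos h, one_mul]
    have hkey : Real.sign β * (|β| * (2 + β) / (4 * (VarT β)^2 * (1+β)^4))
        = 4*β*(β+2) / (3*β^2+4*β+4)^2 := by
      rw [show Real.sign β * (|β| * (2 + β) / (4 * (VarT β)^2 * (1+β)^4))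
          = (Real.sign β * |β|) * (2 + β) / (4 * (VarT β)^2 * (1+β)^4) from by ring,
        hsm, hVT]
      have hd := (hD β).ne'
      field_simp
      ring
    rw [hkey]
    exact hΩd
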